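/- arXiv:1205.4875 — 2 statements merged into one kernel-verified Lean document; each statement's English description precedes it below -/
import Mathlib

section
/- Let n,k ≥ 1 and let r be the unique integer with |S_{n,r}| ≤ k < |S_{n,r+1}|, and suppose |S_{n,r}| < k. For a finite abelian group G of order k and a surjective group homomorphism φ : ℤ^n → G, one has π(n,G,φ) = f(n,k) if and only if the restriction of φ to S_{n,r} is injective and the restriction of φ to S_{n,r+1} is surjective. -/
open Set

/-- The Lee (Manhattan) distance between two words in `ℤ^n`. -/
def leeDist {n : ℕ} (v w : Fin n → ℤ) : ℕ := ∑ i, (v i - w i).natAbs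

/-- The Lee sphere `S_{n,r}` of radius `r` centered at the origin. -/
def leeSphere (n r : ℕ) : Set (Fin n → ℤ) := {x | leeDist x 0 ≤ r}

/-- `|S_{n,r}|`, the cardinality of the Lee sphere. -/
noncomputable def sphereCard (n r : ℕ) : ℕ := (leeSphere n r).ncard

/-- `π(n,G,φ,g)`: the minimum Lee distance from the origin of a preimage of `g` under `φ`. -/
noncomputable def piMinDist {n : ℕ} {G : Type*} [AddCommGroup G]
    (φ : (Fin n → ℤ) →+ G) (g : G) : ℕ :=
  sInf {d | ∃ x : Fin n → ℤ, φ x = g ∧ leeDist x 0 = d}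

/-- `π(n,G,φ) = ∑_{g ∈ G} π(n,G,φ,g)`. -/
noncomputable def piEmbed {n : ℕ} {G : Type*} [AddCommGroup G] [Fintype G]
    (φ : (Fin n → ℤ) →+ G) : ℕ :=
  ∑ g : G, piMinDist φ g

/-- `f(n,k) = ∑_{i=1}^r i(|S_{n,i}| − |S_{n,i−1}|) + (r+1)(k − |S_{n,r}|)`,
where `r` is the unique integer with `|S_{n,r}| ≤ k < |S_{n,r+1}|`. -/
noncomputable def fnk (n k r : ℕ) : ℕ :=
  (∑ i ∈ Finset.Icc 1 r, i * (sphereCard n i - sphereCard n (i - 1)))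
    + (r + 1) * (k - sphereCard n r)

lemma leeSphere_finite (n r : ℕ) : (leeSphere n r).Finite := by
  apply Set.Finite.subset (Set.Finite.pi (t := fun _ : Fin n => Set.Icc (-(r : ℤ)) r)
    (fun i => Set.finite_Icc _ _))
  intro x hx
  simp only [Set.mem_pi, Set.mem_univ, Set.mem_Icc, forall_true_left]
  intro i
  have h1 : (x i - (0 : Fin n → ℤ) i).natAbs ≤ r :=
    le_trans (Finset.single_le_sum (f := fun j => (x j - (0 : Fin n → ℤ) j).natAbs)
      (fun _ _ => Nat.zero_le _) (Finset.mem_univ i)) hx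
  simp only [Pi.zero_apply, sub_zero] at h1
  omega

lemma leeSphere_mono (n : ℕ) {d e : ℕ} (h : d ≤ e) : leeSphere n d ⊆ leeSphere n e :=
  fun _ hx => le_trans hx h

lemma sphereCard_mono (n : ℕ) {d e : ℕ} (h : d ≤ e) : sphereCard n d ≤ sphereCard n e :=
  Set.ncard_le_ncard (leeSphere_mono n h) (leeSphere_finite n e)

lemma piMinDist_le_iff {n : ℕ} {G : Type*} [AddCommGroup G]
    (φ : (Fin n → ℤ) →+ G) (hφ : Function.Surjective φ) (g : G) (d : ℕ) :
    piMinDist φ g ≤ d ↔ g ∈ φ '' leeSphere n d := by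
  constructor
  · intro h
    have hne : {d | ∃ x : Fin n → ℤ, φ x = g ∧ leeDist x 0 = d}.Nonempty := by
      obtain ⟨x, hx⟩ := hφ g
      exact ⟨leeDist x 0, x, hx, rfl⟩
    obtain ⟨x, hx, hd⟩ := Nat.sInf_mem hne
    exact ⟨x, by rw [leeSphere, Set.mem_setOf_eq, hd]; exact h, hx⟩
  · rintro ⟨x, hx, rfl⟩
    exact le_trans (Nat.sInf_le ⟨x, rfl, rfl⟩) hx

lemma fnk_eq_sum (n k r : ℕ) (h : sphereCard n r ≤ k) :
    fnk n k r = ∑ d ∈ Finset.range (r + 1), (k - sphereCard n d) := by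
  induction r with
  | zero => simp [fnk]
  | succ r ih =>
    have hr : sphereCard n r ≤ k := le_trans (sphereCard_mono n (Nat.le_succ r)) h
    have hab : sphereCard n r ≤ sphereCard n (r + 1) := sphereCard_mono n (Nat.le_succ r)
    rw [Finset.sum_range_succ, ← ih hr, fnk, fnk,
      Finset.sum_Icc_succ_top (Nat.one_le_iff_ne_zero.mpr (Nat.succ_ne_zero r))]
    have h1 : sphereCard n (r + 1) - sphereCard n r + (k - sphereCard n (r + 1))
        = k - sphereCard n r := by omega
    simp only [Nat.add_sub_cancel]
    calc ∑ i ∈ Finset.Icc 1 r, i * (sphereCard n i - sphereCard n (i - 1))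
          + (r + 1) * (sphereCard n (r + 1) - sphereCard n r)
          + (r + 1 + 1) * (k - sphereCard n (r + 1))
        = ∑ i ∈ Finset.Icc 1 r, i * (sphereCard n i - sphereCard n (i - 1))
          + ((r + 1) * ((sphereCard n (r + 1) - sphereCard n r) + (k - sphereCard n (r + 1)))
            + (k - sphereCard n (r + 1))) := by ring
      _ = _ := by rw [h1]; ring

lemma sum_eq_layers {G : Type*} [Fintype G] (t : G → ℕ) (M : ℕ) (ht : ∀ g, t g < M) :
    ∑ g, t g = ∑ d ∈ Finset.range M, (Finset.univ.filter fun g => d < t g).card := by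
  classical
  calc ∑ g, t g
      = ∑ g, ((Finset.range M).filter fun d => d < t g).card := by
        refine Finset.sum_congr rfl fun g _ => ?_
        have hfe : ((Finset.range M).filter fun d => d < t g) = Finset.range (t g) := by
          ext d
          simp only [Finset.mem_filter, Finset.mem_range]
          have := ht g
          omega
        rw [hfe, Finset.card_range]
    _ = ∑ g, ∑ d ∈ Finset.range M, if d < t g then 1 else 0 :=
        Finset.sum_congr rfl fun g _ => Finset.card_filter _ _
    _ = ∑ d ∈ Finset.range M, ∑ g, if d < t g then 1 else 0 := Finset.sum_comm
    _ = _ := Finset.sum_congr rfl fun d _ => (Finset.card_filter _ _).symm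

theorem embedding_number_eq_iff
    (n k : ℕ) (hn : 1 ≤ n) (hk : 1 ≤ k)
    (r : ℕ) (hr₁ : sphereCard n r ≤ k) (hr₂ : k < sphereCard n (r + 1))
    (hlt : sphereCard n r < k)
    (G : Type) [AddCommGroup G] [Fintype G] (hG : Nat.card G = k)
    (φ : (Fin n → ℤ) →+ G) (hφ : Function.Surjective φ) :
    piEmbed φ = fnk n k r ↔
      Set.InjOn φ (leeSphere n r) ∧ Set.SurjOn φ (leeSphere n (r + 1)) Set.univ := by
  classical
  set N : ℕ → ℕ := fun d => (φ '' leeSphere n d).ncard with hNdef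
  set M : ℕ := piEmbed φ + r + 2 with hMdef
  have huniv : (Finset.univ : Finset G).card = k := by
    rw [Finset.card_univ, ← Nat.card_eq_fintype_card, hG]
  have hNfilter : ∀ d, (Finset.univ.filter fun g => piMinDist φ g ≤ d).card = N d := by
    intro d
    rw [hNdef, ← Set.ncard_coe_finset]
    congr 1
    ext g
    simp [piMinDist_le_iff φ hφ]
  have hNle : ∀ d, N d ≤ sphereCard n d := fun d =>
    Set.ncard_image_le (leeSphere_finite n d)
  have hNk : ∀ d, N d ≤ k := by
    intro d
    have h1 : N d ≤ (Set.univ : Set G).ncard :=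
      Set.ncard_le_ncard (Set.subset_univ _) Set.finite_univ
    rwa [Set.ncard_univ, hG] at h1
  have htlt : ∀ g, piMinDist φ g < M := by
    intro g
    have h1 : piMinDist φ g ≤ piEmbed φ :=
      Finset.single_le_sum (fun _ _ => Nat.zero_le _) (Finset.mem_univ g)
    omega
  have hcard : ∀ d, (Finset.univ.filter fun g => d < piMinDist φ g).card = k - N d := by
    intro d
    have h1 := Finset.card_filter_add_card_filter_not
      (s := (Finset.univ : Finset G)) (p := fun g => piMinDist φ g ≤ d)
    simp only [not_le] at h1
    have h2 := hNfilter d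
    omega
  have hpi : piEmbed φ = ∑ d ∈ Finset.range M, (k - N d) := by
    rw [piEmbed, sum_eq_layers _ M htlt]
    exact Finset.sum_congr rfl fun d _ => hcard d
  have hf : fnk n k r
      = ∑ d ∈ Finset.range M, (if d ≤ r then k - sphereCard n d else 0) := by
    rw [fnk_eq_sum n k r hr₁]
    rw [← Finset.sum_subset (Finset.range_subset_range.mpr (show r + 1 ≤ M by omega))
      (fun d _ hd => by
        rw [Finset.mem_range] at hd
        rw [if_neg (by omega)])]
    refine Finset.sum_congr rfl fun d hd => ?_
    rw [Finset.mem_range] at hd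
    rw [if_pos (by omega)]
  have hle : ∀ d ∈ Finset.range M,
      (if d ≤ r then k - sphereCard n d else 0) ≤ k - N d := by
    intro d _
    split
    · have := hNle d; omega
    · exact Nat.zero_le _
  rw [hpi, hf, eq_comm, Finset.sum_eq_sum_iff_of_le hle]
  constructor
  · intro h
    constructor
    · have hr' : r ∈ Finset.range M := Finset.mem_range.mpr (by omega)
      have h1 := h r hr'
      rw [if_pos le_rfl] at h1
      have hNr : N r = sphereCard n r := by
        have := hNle r; omega
      exact Set.injOn_of_ncard_image_eq hNr (leeSphere_finite n r)
    · have hr' : r + 1 ∈ Finset.range M := Finset.mem_range.mpr (by omega)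
      have h1 := h (r + 1) hr'
      rw [if_neg (by omega)] at h1
      have hN1 : N (r + 1) = k := by
        have := hNk (r + 1); omega
      have heq : φ '' leeSphere n (r + 1) = Set.univ := by
        refine (Set.eq_of_subset_of_ncard_le (Set.subset_univ _) ?_ (Set.finite_univ : (Set.univ : Set G).Finite))
        rw [Set.ncard_univ, hG, ← hN1]
      exact fun g _ => heq ▸ Set.mem_univ g
  · rintro ⟨hinj, hsurj⟩ d hd
    split
    · rename_i hdr
      have hNd : N d = sphereCard n d :=
        Set.ncard_image_of_injOn (hinj.mono (leeSphere_mono n hdr))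
      rw [hNd]
    · rename_i hdr
      have hsub : Set.univ ⊆ φ '' leeSphere n d :=
        fun g hg => Set.image_mono (leeSphere_mono n (by omega)) (hsurj hg)
      have hNd : N d = k := by
        have h1 : k ≤ N d := by
          have h2 : (Set.univ : Set G).ncard ≤ N d :=
            Set.ncard_le_ncard hsub ((leeSphere_finite n d).image φ)
          rwa [Set.ncard_univ, hG] at h2
        have := hNk d; omega
      omega
end

section
/- For each n > 2, the set of integers e ≥ 1 for which there exists a linear QPL(n,e) code is finite. -/
open Set

/-- `L` is a quasi-perfect `e`-error-correcting Lee code `QPL(n,e)`. -/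
def IsQPLCode {n : ℕ} (e : ℕ) (L : Set (Fin n → ℤ)) : Prop :=
  (∀ v ∈ L, ∀ w ∈ L, v ≠ w → 2 * e + 1 ≤ leeDist v w) ∧
  ∀ x : Fin n → ℤ, ∃ c ∈ L, leeDist x c ≤ e + 1

private lemma two_min_eq (a b : ℤ) : 2 * min a b = a + b - |a - b| := by
  rcases le_total a b with h | h
  · rw [min_eq_left h, abs_of_nonpos (by linarith)]; ring
  · rw [min_eq_right h, abs_of_nonneg (by linarith)]; ring

private lemma leeDist_cast {n : ℕ} (v w : Fin n → ℤ) :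
    (leeDist v w : ℤ) = ∑ i, |v i - w i| := by
  unfold leeDist
  rw [Nat.cast_sum]
  exact Finset.sum_congr rfl fun i _ => Int.natCast_natAbs _

set_option maxHeartbeats 1000000 in
private lemma qpl_main {n e : ℕ} (hn : 3 ≤ n)
    (hbig : 4 * (n + 2) * (5 * n + 1) ^ n + 20 * n + 200 < e)
    (L : AddSubgroup (Fin n → ℤ)) (hL : IsQPLCode e (L : Set (Fin n → ℤ))) : False := by
  classical
  obtain ⟨hpackN, hcovN⟩ := hL
  set N : ℤ := (n : ℤ) with hNdef
  set E : ℤ := (e : ℤ) with hEdef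
  have hN3 : (3 : ℤ) ≤ N := by rw [hNdef]; exact_mod_cast hn
  have hKpos : (0 : ℤ) < (5 * N + 1) ^ n := pow_pos (by linarith) n
  have hEbig : 4 * (N + 2) * (5 * N + 1) ^ n + 20 * N + 200 < E := by
    rw [hNdef, hEdef]; exact_mod_cast hbig
  have hpackZ : ∀ c ∈ L, ∀ c' ∈ L, c ≠ c' → 2 * E + 1 ≤ ∑ i, |c i - c' i| := by
    intro c hc c' hc' hne
    have h := hpackN c hc c' hc' hne
    have h2 : ((2 * e + 1 : ℕ) : ℤ) ≤ (leeDist c c' : ℤ) := by exact_mod_cast h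
    rw [leeDist_cast] at h2
    rw [hEdef]; push_cast at h2 ⊢; linarith
  have hcovZ : ∀ x : Fin n → ℤ, ∃ c ∈ L, ∑ i, |x i - c i| ≤ E + 1 := by
    intro x
    obtain ⟨c, hc, hd⟩ := hcovN x
    refine ⟨c, hc, ?_⟩
    have h2 : (leeDist x c : ℤ) ≤ ((e + 1 : ℕ) : ℤ) := by exact_mod_cast hd
    rw [leeDist_cast] at h2
    rw [hEdef]; push_cast at h2 ⊢; linarith
  -- the three distinguished indices
  have h0n : 0 < n := by omega
  have h1n : 1 < n := by omega
  have h2n : 2 < n := by omega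
  set i0 : Fin n := ⟨0, h0n⟩ with hi0
  set i1 : Fin n := ⟨1, h1n⟩ with hi1
  set i2 : Fin n := ⟨2, h2n⟩ with hi2
  have ne01 : i0 ≠ i1 := by rw [hi0, hi1]; intro h; simpa using congrArg Fin.val h
  have ne02 : i0 ≠ i2 := by rw [hi0, hi2]; intro h; simpa using congrArg Fin.val h
  have ne12 : i1 ≠ i2 := by rw [hi1, hi2]; intro h; simpa using congrArg Fin.val h
  have triple_card : ({i0, i1, i2} : Finset (Fin n)).card = 3 := by
    rw [Finset.card_insert_of_notMem (by simp [ne01, ne02]),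
        Finset.card_insert_of_notMem (by simp [ne12]), Finset.card_singleton]
  have compl_card : (Finset.univ \ ({i0, i1, i2} : Finset (Fin n))).card = n - 3 := by
    rw [Finset.card_sdiff_of_subset (Finset.subset_univ _), triple_card, Finset.card_univ,
      Fintype.card_fin]
  have sumdec : ∀ f : Fin n → ℤ, ∑ i, f i
      = f i0 + f i1 + f i2 + ∑ i ∈ Finset.univ \ ({i0, i1, i2} : Finset (Fin n)), f i := by
    intro f
    have h := Finset.sum_sdiff (f := f) (Finset.subset_univ ({i0, i1, i2} : Finset (Fin n)))
    rw [Finset.sum_insert (by simp [ne01, ne02]), Finset.sum_insert (by simp [ne12]),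
        Finset.sum_singleton] at h
    linarith
  have compl_ge : ∀ f : Fin n → ℤ, (∀ i, 1 ≤ f i) →
      (N - 3) ≤ ∑ i ∈ Finset.univ \ ({i0, i1, i2} : Finset (Fin n)), f i := by
    intro f hf
    have h := Finset.card_nsmul_le_sum (Finset.univ \ ({i0, i1, i2} : Finset (Fin n))) f 1
      (fun i _ => hf i)
    rw [compl_card, nsmul_eq_mul, mul_one] at h
    have hc : ((n - 3 : ℕ) : ℤ) = N - 3 := by rw [hNdef]; omega
    linarith [hc ▸ h]
  set T : ℤ := E + 8 - 2 * N with hTdef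
  -- every suitable point has a "tile": a covering codeword close to the facet
  have exists_tile : ∀ τ σ : ℤ, 2 ≤ τ → 2 ≤ σ → τ + σ ≤ T - 2 →
      ∃ c : Fin n → ℤ,
        (c ∈ L ∧ (∀ i, 1 ≤ c i) ∧ 2 * E + 1 ≤ ∑ i, c i ∧ ∑ i, c i ≤ 2 * E + 3)
        ∧ (τ - 1 ≤ c i0 ∧ T - τ - σ - 1 ≤ c i1 ∧ σ - 1 ≤ c i2) := by
    intro τ σ hτ hσ hτσ
    set x : Fin n → ℤ := fun i =>
      if i = i0 then τ else if i = i1 then T - τ - σ else if i = i2 then σ else 2 with hxdef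
    have hx0 : x i0 = τ := by simp [hxdef]
    have hx1 : x i1 = T - τ - σ := by simp [hxdef, Ne.symm ne01]
    have hx2v : x i2 = σ := by simp [hxdef, Ne.symm ne02, Ne.symm ne12]
    have hxo : ∀ i ∈ Finset.univ \ ({i0, i1, i2} : Finset (Fin n)), x i = 2 := by
      intro i hi
      simp only [Finset.mem_sdiff, Finset.mem_univ, Finset.mem_insert,
        Finset.mem_singleton, true_and] at hi
      push_neg at hi
      simp [hxdef, hi.1, hi.2.1, hi.2.2]
    have hxge : ∀ i, 2 ≤ x i := by
      intro i
      by_cases h1 : i = i0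
      · rw [h1, hx0]; exact hτ
      · by_cases h2 : i = i1
        · rw [h2, hx1]; linarith
        · by_cases h3 : i = i2
          · rw [h3, hx2v]; exact hσ
          · simp [hxdef, h1, h2, h3]
    have hxsum : ∑ i, x i = E + 2 := by
      rw [sumdec x, hx0, hx1, hx2v, Finset.sum_congr rfl hxo, Finset.sum_const, compl_card,
          nsmul_eq_mul]
      have hc : ((n - 3 : ℕ) : ℤ) = N - 3 := by rw [hNdef]; omega
      rw [hc, hTdef]; ring
    obtain ⟨c, hcL, hcdist⟩ := hcovZ x
    have habsx : ∑ i, |x i| = E + 2 := by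
      rw [← hxsum]
      exact Finset.sum_congr rfl fun i _ => abs_of_nonneg (by linarith [hxge i])
    have hcne : c ≠ 0 := by
      intro h
      rw [h] at hcdist
      simp only [Pi.zero_apply, sub_zero] at hcdist
      rw [habsx] at hcdist; linarith
    have hpk := hpackZ c hcL 0 (zero_mem L) hcne
    simp only [Pi.zero_apply, sub_zero] at hpk
    have htri : ∀ i, |c i| ≤ |x i| + |x i - c i| := by
      intro i
      have h1 : c i = x i - (x i - c i) := by ring
      calc |c i| = |x i - (x i - c i)| := by rw [← h1]
        _ ≤ |x i| + |x i - c i| := abs_sub _ _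
    have hslack_sum : ∑ i, (|x i| + |x i - c i| - |c i|) ≤ 2 := by
      rw [Finset.sum_sub_distrib, Finset.sum_add_distrib, habsx]
      linarith
    have hterm : ∀ j, |x j| + |x j - c j| - |c j| ≤ 2 := by
      intro j
      have h1 := Finset.single_le_sum (f := fun i => |x i| + |x i - c i| - |c i|)
        (fun i _ => by show (0:ℤ) ≤ |x i| + |x i - c i| - |c i|; linarith [htri i])
        (Finset.mem_univ j)
      linarith
    have hclow : ∀ i, x i - 1 ≤ c i := by
      intro i
      rcases le_or_gt (x i) (c i) with h | h
      · linarith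
      · have habs1 : |x i - c i| = x i - c i := abs_of_nonneg (by linarith)
        have habs2 : |x i| = x i := abs_of_nonneg (by linarith [hxge i])
        rcases le_or_gt 0 (c i) with h0 | h0
        · have habs3 : |c i| = c i := abs_of_nonneg h0
          have h4 := hterm i; rw [habs1, habs2, habs3] at h4; linarith
        · have habs3 : |c i| = -c i := abs_of_neg h0
          have h4 := hterm i; rw [habs1, habs2, habs3] at h4
          linarith [hxge i]
    have hcpos : ∀ i, 1 ≤ c i := fun i => by linarith [hclow i, hxge i]
    have hcabs : ∑ i, |c i| = ∑ i, c i :=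
      Finset.sum_congr rfl fun i _ => abs_of_nonneg (by linarith [hcpos i])
    have hcsum_up : ∑ i, c i ≤ 2 * E + 3 := by
      have h2 : ∑ i, |c i| ≤ ∑ i, (|x i| + |x i - c i|) := Finset.sum_le_sum fun i _ => htri i
      rw [Finset.sum_add_distrib, habsx] at h2
      rw [← hcabs]; linarith
    have hcsum_lo : 2 * E + 1 ≤ ∑ i, c i := by rw [← hcabs]; exact hpk
    refine ⟨c, ⟨hcL, hcpos, hcsum_lo, hcsum_up⟩, ?_, ?_, ?_⟩
    · have h5 := hclow i0; rw [hx0] at h5; exact h5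
    · have h5 := hclow i1; rw [hx1] at h5; exact h5
    · have h5 := hclow i2; rw [hx2v] at h5; exact h5
  -- two distinct tiles have small coordinate-wise min on the three special coordinates
  have pair_bound : ∀ c c' : Fin n → ℤ,
      (c ∈ L ∧ (∀ i, 1 ≤ c i) ∧ 2 * E + 1 ≤ ∑ i, c i ∧ ∑ i, c i ≤ 2 * E + 3) →
      (c' ∈ L ∧ (∀ i, 1 ≤ c' i) ∧ 2 * E + 1 ≤ ∑ i, c' i ∧ ∑ i, c' i ≤ 2 * E + 3) →
      c ≠ c' →
      min (c i0) (c' i0) + min (c i1) (c' i1) + min (c i2) (c' i2) ≤ E + 5 - N := by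
    intro c c' hc hc' hne
    obtain ⟨hcL, hc1, hclo, hchi⟩ := hc
    obtain ⟨hc'L, hc'1, hc'lo, hc'hi⟩ := hc'
    have hdist := hpackZ c hcL c' hc'L hne
    have hmin2 : 2 * ∑ i, min (c i) (c' i) = ∑ i, c i + ∑ i, c' i - ∑ i, |c i - c' i| := by
      rw [Finset.mul_sum, ← Finset.sum_add_distrib, ← Finset.sum_sub_distrib]
      exact Finset.sum_congr rfl fun i _ => two_min_eq _ _
    have hminsum : ∑ i, min (c i) (c' i) ≤ E + 2 := by omega
    have hdec := sumdec (fun i => min (c i) (c' i))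
    have hrest := compl_ge (fun i => min (c i) (c' i)) (fun i => le_min (hc1 i) (hc'1 i))
    linarith
  -- a tile spanning a whole row has large first two coordinates
  have span_coords : ∀ (c : Fin n → ℤ) (σ : ℤ), 2 ≤ σ → σ ≤ T - 4 →
      (∀ τ, 2 ≤ τ → τ + σ ≤ T - 2 → (τ - 1 ≤ c i0 ∧ T - τ - σ - 1 ≤ c i1 ∧ σ - 1 ≤ c i2)) →
      T - σ - 3 ≤ c i0 ∧ T - σ - 3 ≤ c i1 ∧ σ - 1 ≤ c i2 := by
    intro c σ h2 hT4 hs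
    have h1 := hs (T - 2 - σ) (by linarith) (by linarith)
    have h2' := hs 2 (le_refl 2) (by linarith)
    exact ⟨by linarith [h1.1], by linarith [h2'.2.1], h1.2.2⟩
  -- global constants
  set Knat : ℕ := (n + 2) * (5 * n + 1) ^ n with hKnat
  set H : ℤ := 2 * (Knat : ℤ) + 3 * N + 5 with hHdef
  have hKcast : (Knat : ℤ) = (N + 2) * (5 * N + 1) ^ n := by
    rw [hKnat, hNdef]; push_cast; ring
  have hKge1 : (1 : ℤ) ≤ (Knat : ℤ) := by
    rw [hKcast]; nlinarith [hKpos]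
  have hE2 : 4 * (Knat : ℤ) + 20 * N + 200 < E := by
    rw [hKcast]; ring_nf; ring_nf at hEbig; linarith
  have hHT4 : H ≤ T - 4 := by rw [hHdef, hTdef]; linarith
  have hH2 : 2 * H ≤ E + 4 - 3 * N := by rw [hHdef]; linarith
  have hH2' : (2 : ℤ) ≤ H := by rw [hHdef]; linarith
  -- spanned and flat levels
  set Spanned : Finset ℤ := (Finset.Icc (2 : ℤ) H).filter (fun σ => ∃ c : Fin n → ℤ,
      (c ∈ L ∧ (∀ i, 1 ≤ c i) ∧ 2 * E + 1 ≤ ∑ i, c i ∧ ∑ i, c i ≤ 2 * E + 3) ∧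
      ∀ τ, 2 ≤ τ → τ + σ ≤ T - 2 →
        (τ - 1 ≤ c i0 ∧ T - τ - σ - 1 ≤ c i1 ∧ σ - 1 ≤ c i2)) with hSp
  set Flats : Finset ℤ := Finset.Icc (2 : ℤ) H \ Spanned with hFl
  -- for each flat level there is a tile with third coordinate pinned near the level
  have flat_exists : ∀ σ ∈ Flats, ∃ c : Fin n → ℤ,
      (c ∈ L ∧ (∀ i, 1 ≤ c i) ∧ 2 * E + 1 ≤ ∑ i, c i ∧ ∑ i, c i ≤ 2 * E + 3)
      ∧ σ - 1 ≤ c i2 ∧ c i2 ≤ σ + N := by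
    intro σ hσ
    rw [hFl, Finset.mem_sdiff] at hσ
    obtain ⟨hσIcc, hσnot⟩ := hσ
    have hσIcc' := hσIcc
    rw [Finset.mem_Icc] at hσIcc'
    obtain ⟨hσ2, hσH⟩ := hσIcc'
    have hnospan : ¬ ∃ c : Fin n → ℤ,
        (c ∈ L ∧ (∀ i, 1 ≤ c i) ∧ 2 * E + 1 ≤ ∑ i, c i ∧ ∑ i, c i ≤ 2 * E + 3) ∧
        ∀ τ, 2 ≤ τ → τ + σ ≤ T - 2 →
          (τ - 1 ≤ c i0 ∧ T - τ - σ - 1 ≤ c i1 ∧ σ - 1 ≤ c i2) := by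
      intro hex
      apply hσnot
      rw [hSp, Finset.mem_filter]
      exact ⟨hσIcc, hex⟩
    have hσT : σ ≤ T - 4 := le_trans hσH hHT4
    obtain ⟨c, hcTile, hcServe⟩ := exists_tile 2 σ (le_refl 2) hσ2 (by linarith)
    have hcnospan : ¬ ∀ τ, 2 ≤ τ → τ + σ ≤ T - 2 →
        (τ - 1 ≤ c i0 ∧ T - τ - σ - 1 ≤ c i1 ∧ σ - 1 ≤ c i2) := by
      intro hall; exact hnospan ⟨c, hcTile, hall⟩
    push_neg at hcnospan
    obtain ⟨τ₀, hτ₀2, hτ₀T, hτ₀ns'⟩ := hcnospan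
    have hτ₀ns : ¬(τ₀ - 1 ≤ c i0 ∧ T - τ₀ - σ - 1 ≤ c i1 ∧ σ - 1 ≤ c i2) :=
      fun hA => absurd hA.2.2 (not_le.mpr (hτ₀ns' hA.1 hA.2.1))
    have hτ₀3 : 3 ≤ τ₀ := by
      rcases eq_or_lt_of_le hτ₀2 with h | h
      · exfalso; apply hτ₀ns; rw [← h]; exact hcServe
      · omega
    -- find minimal failing τ
    have hPex : ∃ k : ℕ,
        ¬((3 + (k : ℤ)) - 1 ≤ c i0 ∧ T - (3 + (k : ℤ)) - σ - 1 ≤ c i1 ∧ σ - 1 ≤ c i2)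
        ∧ (3 + (k : ℤ)) + σ ≤ T - 2 := by
      refine ⟨(τ₀ - 3).toNat, ?_, ?_⟩
      · have harith : (3 + (((τ₀ - 3).toNat : ℕ) : ℤ)) = τ₀ := by omega
        rw [harith]; exact hτ₀ns
      · have harith : (3 + (((τ₀ - 3).toNat : ℕ) : ℤ)) = τ₀ := by omega
        rw [harith]; exact hτ₀T
    have hPk₁ := Nat.find_spec hPex
    set k₁ : ℕ := Nat.find hPex with hk₁
    set τ₁ : ℤ := 3 + (k₁ : ℤ) with hτ₁def
    have hτ₁ns : ¬(τ₁ - 1 ≤ c i0 ∧ T - τ₁ - σ - 1 ≤ c i1 ∧ σ - 1 ≤ c i2) := hPk₁.1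
    have hτ₁T : τ₁ + σ ≤ T - 2 := hPk₁.2
    have hτ₁2 : 2 ≤ τ₁ := by rw [hτ₁def]; omega
    have hprev : (τ₁ - 1) - 1 ≤ c i0 ∧ T - (τ₁ - 1) - σ - 1 ≤ c i1 ∧ σ - 1 ≤ c i2 := by
      rcases Nat.eq_zero_or_pos k₁ with h0 | hpos
      · have hq : τ₁ - 1 = 2 := by rw [hτ₁def, h0]; norm_num
        rw [hq]
        exact ⟨by linarith [hcServe.1], by linarith [hcServe.2.1], hcServe.2.2⟩
      · have hm := Nat.find_min hPex (m := k₁ - 1) (by omega)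
        have harith2 : (3 + ((k₁ - 1 : ℕ) : ℤ)) = τ₁ - 1 := by rw [hτ₁def]; omega
        rw [harith2] at hm
        by_contra hS
        exact hm ⟨hS, by linarith⟩
    obtain ⟨c', hc'Tile, hc'Serve⟩ := exists_tile τ₁ σ hτ₁2 hσ2 hτ₁T
    have hnecc' : c ≠ c' := by
      intro h; apply hτ₁ns; rw [h]; exact hc'Serve
    have hpb := pair_bound c c' hcTile hc'Tile hnecc'
    have hmin0 : τ₁ - 2 ≤ min (c i0) (c' i0) :=
      le_min (by linarith [hprev.1]) (by linarith [hc'Serve.1])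
    have hmin1 : T - τ₁ - σ - 1 ≤ min (c i1) (c' i1) :=
      le_min (by linarith [hprev.2.1]) hc'Serve.2.1
    have hmin2' : min (c i2) (c' i2) ≤ σ + N := by linarith
    rcases le_total (c i2) (c' i2) with h | h
    · refine ⟨c, hcTile, hcServe.2.2, ?_⟩
      rw [min_eq_left h] at hmin2'; exact hmin2'
    · refine ⟨c', hc'Tile, hc'Serve.2.2, ?_⟩
      rw [min_eq_right h] at hmin2'; exact hmin2'
  -- choose a flat witness for each flat level
  have hgex : ∀ σ : ℤ, ∃ c : Fin n → ℤ, σ ∈ Flats →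
      ((c ∈ L ∧ (∀ i, 1 ≤ c i) ∧ 2 * E + 1 ≤ ∑ i, c i ∧ ∑ i, c i ≤ 2 * E + 3)
        ∧ σ - 1 ≤ c i2 ∧ c i2 ≤ σ + N) := by
    intro σ
    by_cases h : σ ∈ Flats
    · obtain ⟨c, hc⟩ := flat_exists σ h
      exact ⟨c, fun _ => hc⟩
    · exact ⟨fun _ => 1, fun hh => absurd hh h⟩
  choose g hgspec' using hgex
  have hgspec : ∀ σ ∈ Flats,
      ((g σ ∈ L ∧ (∀ i, 1 ≤ g σ i) ∧ 2 * E + 1 ≤ ∑ i, g σ i ∧ ∑ i, g σ i ≤ 2 * E + 3)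
        ∧ σ - 1 ≤ g σ i2 ∧ g σ i2 ≤ σ + N) := fun σ hσ => hgspec' σ hσ
  -- each tile is a flat witness for at most n+2 levels
  have fiber_bound : ∀ b ∈ Flats.image g,
      (Flats.filter (fun σ => g σ = b)).card ≤ n + 2 := by
    intro b _hb
    have hsub : Flats.filter (fun σ => g σ = b) ⊆ Finset.Icc (b i2 - N) (b i2 + 1) := by
      intro σ hσ
      rw [Finset.mem_filter] at hσ
      obtain ⟨hσF, hgb⟩ := hσ
      have h2 := (hgspec σ hσF).2
      rw [hgb] at h2
      rw [Finset.mem_Icc]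
      constructor <;> linarith [h2.1, h2.2]
    calc (Flats.filter (fun σ => g σ = b)).card
        ≤ (Finset.Icc (b i2 - N) (b i2 + 1)).card := Finset.card_le_card hsub
      _ = n + 2 := by rw [Int.card_Icc, hNdef]; omega
  -- there are at most (5n+1)^n distinct tiles (they are 2e+1 apart in a small box)
  set d : ℤ := E / N with hddef
  have hNpos : (0 : ℤ) < N := by linarith
  have hdfacts : N * d ≤ E ∧ E - N + 1 ≤ N * d := by
    have h1 := Int.mul_ediv_add_emod E N
    have h2 := Int.emod_lt_of_pos E hNpos
    have h3 := Int.emod_nonneg E (ne_of_gt hNpos)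
    rw [← hddef] at h1
    constructor <;> linarith
  have hdpos : (1 : ℤ) ≤ d := by
    by_contra hd0
    push_neg at hd0
    have : N * d ≤ 0 := mul_nonpos_of_nonneg_of_nonpos (by linarith) (by linarith)
    linarith [hdfacts.2]
  have img_card : (Flats.image g).card ≤ (5 * n + 1) ^ n := by
    have hmaps : ∀ b ∈ Flats.image g,
        (fun i => b i / d) ∈ Fintype.piFinset (fun _ : Fin n => Finset.Icc (0 : ℤ) (5 * N)) := by
      intro b hb
      obtain ⟨σ, hσ, rfl⟩ := Finset.mem_image.mp hb
      have hT := (hgspec σ hσ).1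
      rw [Fintype.mem_piFinset]
      intro i
      rw [Finset.mem_Icc]
      refine ⟨Int.ediv_nonneg (by linarith [hT.2.1 i]) (by linarith), ?_⟩
      by_contra hq
      push_neg at hq
      have hci_up : g σ i ≤ 2 * E + 3 := by
        have h6 := Finset.single_le_sum (f := fun j => g σ j)
          (fun j _ => by linarith [hT.2.1 j]) (Finset.mem_univ i)
        linarith [hT.2.2.2]
      have hid := Int.mul_ediv_add_emod (g σ i) d
      have hr0 := Int.emod_nonneg (g σ i) (by linarith : d ≠ 0)
      have hmul : d * (5 * N + 1) ≤ d * (g σ i / d) :=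
        mul_le_mul_of_nonneg_left (by linarith) (by linarith)
      have hexp : d * (5 * N + 1) = 5 * (N * d) + d := by ring
      linarith [hdfacts.2]
    have hinj : Set.InjOn (fun (b : Fin n → ℤ) => fun i => b i / d) (Flats.image g) := by
      intro b hb b' hb' heq
      by_contra hbb
      rw [Finset.mem_coe] at hb hb'
      obtain ⟨σ, hσ, rfl⟩ := Finset.mem_image.mp hb
      obtain ⟨σ', hσ', rfl⟩ := Finset.mem_image.mp hb'
      have h1 := (hgspec σ hσ).1
      have h2 := (hgspec σ' hσ').1
      have hdist := hpackZ _ h1.1 _ h2.1 hbb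
      have hptw : ∀ i, |g σ i - g σ' i| ≤ d - 1 := by
        intro i
        have he : g σ i / d = g σ' i / d := congrFun heq i
        have ha := Int.mul_ediv_add_emod (g σ i) d
        have hb2 := Int.mul_ediv_add_emod (g σ' i) d
        have hr1 := Int.emod_nonneg (g σ i) (by linarith : d ≠ 0)
        have hr2 := Int.emod_nonneg (g σ' i) (by linarith : d ≠ 0)
        have hl1 := Int.emod_lt_of_pos (g σ i) (by linarith : 0 < d)
        have hl2 := Int.emod_lt_of_pos (g σ' i) (by linarith : 0 < d)
        have hq9 : d * (g σ i / d) = d * (g σ' i / d) := by rw [he]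
        rw [abs_le]
        constructor <;> linarith
      have hsum : ∑ i, |g σ i - g σ' i| ≤ n • (d - 1) := by
        have h7 := Finset.sum_le_card_nsmul Finset.univ (fun i => |g σ i - g σ' i|) (d - 1)
          (fun i _ => hptw i)
        rwa [Finset.card_univ, Fintype.card_fin] at h7
      rw [nsmul_eq_mul, ← hNdef] at hsum
      have hNd : N * (d - 1) = N * d - N := by ring
      linarith [hdfacts.1]
    calc (Flats.image g).card
        ≤ (Fintype.piFinset (fun _ : Fin n => Finset.Icc (0 : ℤ) (5 * N))).card :=
          Finset.card_le_card_of_injOn _ hmaps hinj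
      _ = (5 * n + 1) ^ n := by
          rw [Fintype.card_piFinset]
          have hcc : ∀ _i : Fin n, (Finset.Icc (0 : ℤ) (5 * N)).card = 5 * n + 1 := by
            intro _i; rw [Int.card_Icc, hNdef]; omega
          rw [Finset.prod_congr rfl (fun i _ => hcc i), Finset.prod_const, Finset.card_univ,
            Fintype.card_fin]
  have flats_card : Flats.card ≤ Knat := by
    calc Flats.card = ∑ b ∈ Flats.image g, (Flats.filter (fun σ => g σ = b)).card :=
        Finset.card_eq_sum_card_image g Flats
      _ ≤ (Flats.image g).card • (n + 2) :=
          Finset.sum_le_card_nsmul _ _ _ fiber_bound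
      _ = (Flats.image g).card * (n + 2) := by rw [smul_eq_mul]
      _ ≤ (5 * n + 1) ^ n * (n + 2) := Nat.mul_le_mul_right _ img_card
      _ = Knat := by rw [hKnat]; ring
  -- bound the spanned levels
  have spanned_bound : (Spanned.card : ℤ) ≤ (Flats.card : ℤ) + 3 * N := by
    rcases Finset.eq_empty_or_nonempty Spanned with hemp | hne
    · rw [hemp]
      simp only [Finset.card_empty, Nat.cast_zero]
      positivity
    · set a : ℤ := Spanned.min' hne with hadef
      have haS : a ∈ Spanned := Finset.min'_mem _ hne
      have haS' := haS
      rw [hSp, Finset.mem_filter, Finset.mem_Icc] at haS'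
      obtain ⟨⟨ha2, haH⟩, c₀, hc₀T, hc₀S⟩ := haS'
      have hsub : Spanned ⊆ Finset.Icc a (2 * a + 3 * N - 3) := by
        intro σ hσS
        have haσ : a ≤ σ := Finset.min'_le _ _ hσS
        rw [hSp, Finset.mem_filter, Finset.mem_Icc] at hσS
        obtain ⟨⟨hσ2, hσH⟩, c, hcT, hcS⟩ := hσS
        have hceq : c = c₀ := by
          by_contra hnecc
          have hpb := pair_bound c c₀ hcT hc₀T hnecc
          have hcc := span_coords c σ hσ2 (by linarith) hcS
          have hcc₀ := span_coords c₀ a ha2 (by linarith) hc₀S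
          have hm0 : T - σ - 3 ≤ min (c i0) (c₀ i0) :=
            le_min hcc.1 (by linarith [hcc₀.1])
          have hm1 : T - σ - 3 ≤ min (c i1) (c₀ i1) :=
            le_min hcc.2.1 (by linarith [hcc₀.2.1])
          have hm2 : a - 1 ≤ min (c i2) (c₀ i2) :=
            le_min (by linarith [hcc.2.2]) hcc₀.2.2
          linarith
        have hcc₀ := span_coords c₀ a ha2 (by linarith) hc₀S
        have hspanσ : σ - 1 ≤ c₀ i2 := by
          rw [hceq] at hcS
          exact (span_coords c₀ σ hσ2 (by linarith) hcS).2.2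
        have hrest := compl_ge c₀ hc₀T.2.1
        have hde := sumdec c₀
        rw [Finset.mem_Icc]
        exact ⟨haσ, by linarith [hc₀T.2.2.2, hcc₀.1, hcc₀.2.1]⟩
      have hcard := Finset.card_le_card hsub
      rw [Int.card_Icc] at hcard
      have hsub2 : Finset.Icc (2 : ℤ) (a - 1) ⊆ Flats := by
        intro σ hσ
        rw [Finset.mem_Icc] at hσ
        rw [hFl, Finset.mem_sdiff]
        constructor
        · rw [Finset.mem_Icc]; exact ⟨hσ.1, by linarith⟩
        · intro hσS
          have := Finset.min'_le _ _ hσS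
          rw [← hadef] at this
          linarith [hσ.2]
      have hcard2 := Finset.card_le_card hsub2
      rw [Int.card_Icc] at hcard2
      omega
  -- final contradiction
  have hIccCard : (Finset.Icc (2 : ℤ) H).card = (H - 1).toNat := by
    rw [Int.card_Icc]
    congr 1
    ring
  have hFlatsCard : Flats.card = (Finset.Icc (2 : ℤ) H).card - Spanned.card := by
    rw [hFl]
    exact Finset.card_sdiff_of_subset (by rw [hSp]; exact Finset.filter_subset _ _)
  have hSpLe : Spanned.card ≤ (Finset.Icc (2 : ℤ) H).card := by
    rw [hSp]; exact Finset.card_filter_le _ _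
  omega







theorem finitely_many_linear_QPL (n : ℕ) (hn : 2 < n) :
    {e : ℕ | 1 ≤ e ∧
      ∃ L : AddSubgroup (Fin n → ℤ), IsQPLCode e (L : Set (Fin n → ℤ))}.Finite := by
  apply Set.Finite.subset (Set.finite_Iic (4 * (n + 2) * (5 * n + 1) ^ n + 20 * n + 200))
  intro e he
  obtain ⟨-, L, hL⟩ := he
  simp only [Set.mem_Iic]
  by_contra hgt
  push_neg at hgt
  exact qpl_main (by omega) hgt L hL
end
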